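/- arXiv:1008.4502 — 2 statements merged into one kernel-verified Lean document; each statement's English description precedes it below -/
import Mathlib

section
/- Let j : ℝ → [0,∞) be integrable with j(v) = j(−v), 𝓡 = ∫ j, σ = ∫ j(v)v² dv < ∞, and define φ(q) = ∫_ℝ j(v) e^{ivq} dv. For fixed λ > 0 and v ∈ ℝ, the function ψ_t(v) = exp(∫_0^t [φ(t^{−3/2}·(2/λ)(t−r)v) − φ(0)] dr) converges as t → ∞ to exp(−(2σ/(3λ²)) v²). -/
open MeasureTheory


lemma abs_sin_sub_le_cube (x : ℝ) : |Real.sin x - x| ≤ 2 * |x| ^ 3 := by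
  rcases le_or_gt |x| 1 with h | h
  · have hb := Real.sin_bound h
    have h4 : |x| ^ 4 ≤ |x| ^ 3 := pow_le_pow_of_le_one (abs_nonneg x) h (by norm_num)
    have h1 : |Real.sin x - x| ≤ |Real.sin x - (x - x ^ 3 / 6)| + |x ^ 3 / 6| := by
      have : Real.sin x - x = (Real.sin x - (x - x ^ 3 / 6)) + (-(x ^ 3) / 6) := by ring
      rw [this]
      calc |(Real.sin x - (x - x ^ 3 / 6)) + (-(x ^ 3) / 6)|
          ≤ |Real.sin x - (x - x ^ 3 / 6)| + |(-(x ^ 3) / 6)| := abs_add_le _ _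
        _ = |Real.sin x - (x - x ^ 3 / 6)| + |x ^ 3 / 6| := by rw [abs_div, abs_div, abs_neg]
    have h2 : |x ^ 3 / 6| = |x| ^ 3 / 6 := by rw [abs_div, abs_pow]; norm_num
    have h5 : |x| ^ 5 ≤ |x| ^ 3 := pow_le_pow_of_le_one (abs_nonneg x) h (by norm_num)
    nlinarith [abs_nonneg x, pow_nonneg (abs_nonneg x) 3]
  · have h1 : |Real.sin x| ≤ 1 := abs_le.mpr ⟨Real.neg_one_le_sin x, Real.sin_le_one x⟩
    have h2 : |Real.sin x - x| ≤ |Real.sin x| + |x| := abs_sub _ _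
    have h3 : |x| ≤ |x| ^ 3 := le_self_pow₀ h.le (by norm_num)
    nlinarith [abs_nonneg x]

lemma sinc_cube_lim :
    Filter.Tendsto (fun x : ℝ => (Real.sin x - x) / x ^ 3) (nhdsWithin 0 {0}ᶜ)
      (nhds (-(1 / 6))) := by
  have key : Filter.Tendsto (fun x : ℝ => (Real.sin x - x) / x ^ 3 + 1 / 6)
      (nhdsWithin 0 {0}ᶜ) (nhds 0) := by
    apply squeeze_zero_norm' (a := fun x : ℝ => |x| * (5 / 96))
    · have h1 : {x : ℝ | |x| ≤ 1} ∈ nhdsWithin (0:ℝ) {0}ᶜ := by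
        apply nhdsWithin_le_nhds
        have : Metric.closedBall (0:ℝ) 1 ∈ nhds (0:ℝ) := Metric.closedBall_mem_nhds _ one_pos
        simpa [Metric.closedBall, Real.dist_eq] using this
      have h2 : {0}ᶜ ∈ nhdsWithin (0:ℝ) {0}ᶜ := self_mem_nhdsWithin
      filter_upwards [h1, h2] with x hx1 hx0
      have hx : x ≠ 0 := hx0
      have hx3 : x ^ 3 ≠ 0 := pow_ne_zero _ hx
      have heq : (Real.sin x - x) / x ^ 3 + 1 / 6
          = (Real.sin x - (x - x ^ 3 / 6)) / x ^ 3 := by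
        field_simp; ring
      rw [heq, norm_div]
      have hb := Real.sin_bound hx1
      have hpos : (0:ℝ) < ‖x ^ 3‖ := norm_pos_iff.mpr hx3
      rw [div_le_iff₀ hpos]
      have : ‖x ^ 3‖ = |x| ^ 3 := by rw [Real.norm_eq_abs, abs_pow]
      rw [this]
      calc ‖Real.sin x - (x - x ^ 3 / 6)‖ ≤ |x| ^ 4 * (5 / 96) := by
            rw [Real.norm_eq_abs]
            have h5 : |x| ^ 5 ≤ |x| ^ 4 := pow_le_pow_of_le_one (abs_nonneg x) hx1 (by norm_num)
            nlinarith [pow_nonneg (abs_nonneg x) 4]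
        _ = |x| * (5 / 96) * |x| ^ 3 := by ring
    · have : Filter.Tendsto (fun x : ℝ => |x| * (5 / 96)) (nhds 0) (nhds 0) := by
        have := (continuous_abs.tendsto (0:ℝ)).mul_const (5 / 96 : ℝ)
        simpa using this
      exact this.mono_left nhdsWithin_le_nhds
  have := key.sub_const (1 / 6 : ℝ)
  simpa using this


lemma odd_integral_zero (j : ℝ → ℝ) (hj : Integrable j) (hjsymm : ∀ v, j (-v) = j v)
    (c : ℝ) : (∫ u : ℝ, j u * Real.sin (u * c)) = 0 := by
  have h := MeasureTheory.integral_neg_eq_self (fun u : ℝ => j u * Real.sin (u * c)) volume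
  have heq : ∀ u : ℝ, j (-u) * Real.sin (-u * c) = -(j u * Real.sin (u * c)) := by
    intro u
    rw [hjsymm u]
    have : Real.sin (-u * c) = -Real.sin (u * c) := by rw [neg_mul, Real.sin_neg]
    rw [this]; ring
  rw [show (fun u : ℝ => j (-u) * Real.sin (-u * c))
      = (fun u : ℝ => -(j u * Real.sin (u * c))) from funext heq] at h
  rw [integral_neg] at h
  linarith

lemma cexp_integrand_integrable (j : ℝ → ℝ) (hj : Integrable j) (c : ℝ) :
    Integrable (fun u : ℝ => (j u : ℂ) * Complex.exp (Complex.I * ((u * c : ℝ) : ℂ))) := by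
  apply Integrable.mono' (g := fun u => |j u|) hj.abs
  · exact (Complex.continuous_ofReal.comp_aestronglyMeasurable hj.aestronglyMeasurable).mul
      ((Complex.continuous_exp.comp (by continuity)).aestronglyMeasurable)
  · filter_upwards with u
    rw [norm_mul]
    have h1 : ‖Complex.exp (Complex.I * ((u * c : ℝ) : ℂ))‖ = 1 := by
      rw [mul_comm]
      exact Complex.norm_exp_ofReal_mul_I _
    rw [h1, mul_one, Complex.norm_real, Real.norm_eq_abs]

lemma key1 (j : ℝ → ℝ) (hj : Integrable j) (hjsymm : ∀ v, j (-v) = j v) (c : ℝ) :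
    (∫ u : ℝ, (j u : ℂ) * Complex.exp (Complex.I * ((u * c : ℝ) : ℂ)))
      - (∫ u : ℝ, (j u : ℂ))
    = ((∫ u : ℝ, j u * (Real.cos (u * c) - 1) : ℝ) : ℂ) := by
  have h1 := cexp_integrand_integrable j hj c
  have h2 : Integrable (fun u : ℝ => (j u : ℂ)) := hj.ofReal
  rw [← integral_sub h1 h2]
  have hcos : Integrable (fun u : ℝ => j u * (Real.cos (u * c) - 1)) := by
    apply Integrable.mono' (g := fun u => |j u| * 2) (hj.abs.mul_const 2)
    · exact hj.aestronglyMeasurable.mul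
        (by continuity : Continuous fun u : ℝ => Real.cos (u * c) - 1).aestronglyMeasurable
    · filter_upwards with u
      rw [Real.norm_eq_abs, abs_mul]
      gcongr
      have := Real.neg_one_le_cos (u * c)
      have := Real.cos_le_one (u * c)
      rw [abs_le]; constructor <;> linarith
  have hsin : Integrable (fun u : ℝ => j u * Real.sin (u * c)) := by
    apply Integrable.mono' (g := fun u => |j u|) hj.abs
    · exact hj.aestronglyMeasurable.mul
        (by continuity : Continuous fun u : ℝ => Real.sin (u * c)).aestronglyMeasurable
    · filter_upwards with u
      rw [Real.norm_eq_abs, abs_mul]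
      have h1 : |Real.sin (u * c)| ≤ 1 :=
        abs_le.mpr ⟨Real.neg_one_le_sin _, Real.sin_le_one _⟩
      nlinarith [abs_nonneg (j u)]
  have hdecomp : ∀ u : ℝ, (j u : ℂ) * Complex.exp (Complex.I * ((u * c : ℝ) : ℂ)) - (j u : ℂ)
      = ((j u * (Real.cos (u * c) - 1) : ℝ) : ℂ)
        + ((j u * Real.sin (u * c) : ℝ) : ℂ) * Complex.I := by
    intro u
    rw [mul_comm Complex.I, Complex.exp_mul_I]
    rw [← Complex.ofReal_cos, ← Complex.ofReal_sin]
    push_cast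
    ring
  rw [integral_congr_ae (Filter.Eventually.of_forall hdecomp)]
  rw [integral_add (by exact hcos.ofReal) (by exact hsin.ofReal.mul_const Complex.I)]
  rw [integral_mul_const]
  rw [show (∫ (a : ℝ), ((j a * (Real.cos (a * c) - 1) : ℝ) : ℂ))
      = ((∫ (a : ℝ), j a * (Real.cos (a * c) - 1) : ℝ) : ℂ) from integral_ofReal,
    show (∫ (a : ℝ), ((j a * Real.sin (a * c) : ℝ) : ℂ))
      = ((∫ (a : ℝ), j a * Real.sin (a * c) : ℝ) : ℂ) from integral_ofReal]
  rw [odd_integral_zero j hj hjsymm c]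
  simp


lemma key2 (j : ℝ → ℝ) (hj : Integrable j) (g : ℝ → ℝ → ℝ)
    (hg : Continuous fun p : ℝ × ℝ => g p.1 p.2) (hgb : ∀ r u, |g r u| ≤ 2)
    (t : ℝ) (ht : 0 ≤ t) :
    ∫ r in (0:ℝ)..t, (∫ u : ℝ, j u * g r u)
      = ∫ u : ℝ, (∫ r in (0:ℝ)..t, j u * g r u) := by
  have hmono : ∀ r : ℝ, Integrable (fun u => j u * g r u) volume := by
    intro r
    apply Integrable.mono' (g := fun u => |j u| * 2) (hj.abs.mul_const 2)
    · exact hj.aestronglyMeasurable.mul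
        ((hg.comp (continuous_const.prodMk continuous_id)).aestronglyMeasurable)
    · filter_upwards with u
      rw [Real.norm_eq_abs, abs_mul]
      have := hgb r u
      have := abs_nonneg (j u)
      nlinarith
  simp only [intervalIntegral.integral_of_le ht]
  set μ := volume.restrict (Set.Ioc (0:ℝ) t) with hμ
  haveI : IsFiniteMeasure μ := by
    constructor
    rw [hμ, Measure.restrict_apply_univ, Real.volume_Ioc]
    exact ENNReal.ofReal_lt_top
  have hm : AEStronglyMeasurable (fun p : ℝ × ℝ => j p.2 * g p.1 p.2) (μ.prod volume) :=
    (hj.aestronglyMeasurable.comp_quasiMeasurePreserving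
      Measure.quasiMeasurePreserving_snd).mul hg.aestronglyMeasurable
  have hint : Integrable (fun p : ℝ × ℝ => j p.2 * g p.1 p.2) (μ.prod volume) := by
    rw [integrable_prod_iff hm]
    constructor
    · filter_upwards with r
      exact hmono r
    · apply Integrable.mono' (g := fun _ : ℝ => ∫ u : ℝ, |j u| * 2)
        (integrable_const _)
      · exact hm.norm.integral_prod_right'
      · filter_upwards with r
        rw [Real.norm_eq_abs, abs_of_nonneg (integral_nonneg fun u => norm_nonneg _)]
        apply integral_mono (hmono r).norm (hj.abs.mul_const 2)
        intro u
        show ‖j u * g r u‖ ≤ |j u| * 2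
        rw [Real.norm_eq_abs, abs_mul]
        have := hgb r u
        have := abs_nonneg (j u)
        nlinarith
  exact integral_integral_swap hint


lemma key3 (b t : ℝ) (hb : b ≠ 0) :
    (∫ r in (0:ℝ)..t, (Real.cos (b * (t - r)) - 1)) = Real.sin (b * t) / b - t := by
  have hc1 : IntervalIntegrable (fun r => Real.cos (b * (t - r))) volume 0 t :=
    (Continuous.intervalIntegrable (by continuity) 0 t)
  have hc2 : IntervalIntegrable (fun _ : ℝ => (1:ℝ)) volume 0 t :=
    intervalIntegrable_const
  rw [intervalIntegral.integral_sub hc1 hc2]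
  have h1 : (∫ r in (0:ℝ)..t, Real.cos (b * (t - r))) = Real.sin (b * t) / b := by
    rw [intervalIntegral.integral_comp_sub_left (fun s => Real.cos (b * s)) t]
    simp only [sub_self, sub_zero]
    rw [intervalIntegral.integral_comp_mul_left (fun x => Real.cos x) hb]
    simp [integral_cos, div_eq_inv_mul]
  rw [h1]
  simp


lemma rpow_e1 {t : ℝ} (ht : 0 < t) : t ^ (-(3:ℝ)/2) * t = t ^ (-(1:ℝ)/2) := by
  calc t ^ (-(3:ℝ)/2) * t = t ^ (-(3:ℝ)/2) * t ^ (1:ℝ) := by rw [Real.rpow_one]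
    _ = t ^ (-(3:ℝ)/2 + 1) := (Real.rpow_add ht _ _).symm
    _ = t ^ (-(1:ℝ)/2) := by norm_num

lemma rpow_e2 {t : ℝ} (ht : 0 < t) : t ^ (-(1:ℝ)/2) * t ^ (-(1:ℝ)/2) * t = 1 := by
  have h1 : t ^ (-(1:ℝ)/2) * t ^ (-(1:ℝ)/2) = t ^ (-1:ℝ) := by
    rw [← Real.rpow_add ht]; norm_num
  rw [h1, Real.rpow_neg_one]
  exact inv_mul_cancel₀ ht.ne'

lemma rpow_e3 {t : ℝ} (ht : 0 < t) : (t ^ (-(1:ℝ)/2)) ^ 3 = t ^ (-(3:ℝ)/2) := by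
  rw [← Real.rpow_natCast (t ^ (-(1:ℝ)/2)) 3, ← Real.rpow_mul ht.le]
  norm_num

lemma key4 (j : ℝ → ℝ) (hj : Integrable j) (hjnn : ∀ v, 0 ≤ j v)
    (hj2 : Integrable fun u => j u * u ^ 2) (α : ℝ) (hα : α ≠ 0) :
    Filter.Tendsto
      (fun t : ℝ => ∫ u : ℝ,
        j u * (Real.sin (u * α * t ^ (-(1:ℝ)/2)) / (u * α * t ^ (-(3:ℝ)/2)) - t))
      Filter.atTop
      (nhds (∫ u : ℝ, (j u * u ^ 2) * (-(α ^ 2 / 6)))) := by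
  have hae : ∀ᵐ u : ℝ, u ≠ 0 := by
    have : ∀ᵐ u : ℝ, u ∈ ({0}ᶜ : Set ℝ) :=
      MeasureTheory.compl_mem_ae_iff.mpr (measure_singleton 0)
    filter_upwards [this] with u hu using hu
  apply MeasureTheory.tendsto_integral_filter_of_dominated_convergence
    (bound := fun u => (j u * u ^ 2) * (2 * α ^ 2))
  · -- measurability
    filter_upwards with t
    apply hj.aestronglyMeasurable.mul
    apply Measurable.aestronglyMeasurable
    exact ((Real.measurable_sin.comp
        ((measurable_id.mul_const α).mul_const (t ^ (-(1:ℝ)/2)))).div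
      ((measurable_id.mul_const α).mul_const (t ^ (-(3:ℝ)/2)))).sub measurable_const
  · -- bound
    filter_upwards [Filter.eventually_ge_atTop (1:ℝ)] with t ht
    filter_upwards [hae] with u hu
    have ht0 : (0:ℝ) < t := lt_of_lt_of_le one_pos ht
    set s := t ^ (-(1:ℝ)/2) with hs
    set θ := u * α * s with hθdef
    set d := u * α * t ^ (-(3:ℝ)/2) with hddef
    have hspos : 0 < s := Real.rpow_pos_of_pos ht0 _
    have hdpos : 0 < t ^ (-(3:ℝ)/2) := Real.rpow_pos_of_pos ht0 _
    have hθ : θ ≠ 0 := mul_ne_zero (mul_ne_zero hu hα) hspos.ne'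
    have hd : d ≠ 0 := mul_ne_zero (mul_ne_zero hu hα) hdpos.ne'
    have hdt : d * t = θ := by
      rw [hddef, hθdef, hs, mul_assoc, rpow_e1 ht0]
    have hθ2t : θ ^ 2 * t = u ^ 2 * α ^ 2 := by
      have h2 : θ ^ 2 * t = u ^ 2 * α ^ 2 * (s * s * t) := by rw [hθdef]; ring
      rw [h2, hs, rpow_e2 ht0, mul_one]
    have hident : Real.sin θ / d - t = (Real.sin θ - θ) / d := by
      rw [sub_div]
      congr 1
      rw [← hdt, mul_div_cancel_left₀ _ hd]
    rw [hident]
    calc ‖j u * ((Real.sin θ - θ) / d)‖ = j u * (|Real.sin θ - θ| / |d|) := by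
          rw [Real.norm_eq_abs, abs_mul, abs_of_nonneg (hjnn u), abs_div]
      _ ≤ j u * ((2 * |θ| ^ 3) / |d|) := by
          apply mul_le_mul_of_nonneg_left _ (hjnn u)
          exact (div_le_div_iff_of_pos_right (abs_pos.mpr hd)).mpr (abs_sin_sub_le_cube θ)
      _ = j u * (2 * θ ^ 2 * |θ / d|) := by
          rw [abs_div, show |θ| ^ 3 = θ ^ 2 * |θ| by
            rw [pow_succ, sq_abs]]
          ring
      _ = j u * (2 * (θ ^ 2 * t)) := by
          rw [← hdt, mul_div_cancel_left₀ _ hd, abs_of_nonneg ht0.le]; ring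
      _ = (j u * u ^ 2) * (2 * α ^ 2) := by rw [hθ2t]; ring
  · -- bound integrable
    exact hj2.mul_const _
  · -- pointwise limit
    filter_upwards [hae] with u hu
    have hlim1 : Filter.Tendsto (fun t : ℝ => u * α * t ^ (-(1:ℝ)/2))
        Filter.atTop (nhdsWithin 0 {0}ᶜ) := by
      rw [tendsto_nhdsWithin_iff]
      constructor
      · have h0 : Filter.Tendsto (fun t : ℝ => t ^ (-(1:ℝ)/2)) Filter.atTop (nhds 0) := by
          have := tendsto_rpow_neg_atTop (y := (1:ℝ)/2) (by norm_num)
          convert this using 2 with t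
          norm_num
        have := h0.const_mul (u * α)
        simpa using this
      · filter_upwards [Filter.eventually_gt_atTop (0:ℝ)] with t ht0
        have : u * α * t ^ (-(1:ℝ)/2) ≠ 0 :=
          mul_ne_zero (mul_ne_zero hu hα) (Real.rpow_pos_of_pos ht0 _).ne'
        simpa using this
    have hlim3 : Filter.Tendsto
        (fun t : ℝ => j u * (α ^ 2 * u ^ 2 *
          ((Real.sin (u * α * t ^ (-(1:ℝ)/2)) - u * α * t ^ (-(1:ℝ)/2))
            / (u * α * t ^ (-(1:ℝ)/2)) ^ 3)))
        Filter.atTop (nhds (j u * (α ^ 2 * u ^ 2 * (-(1 / 6))))) :=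
      ((sinc_cube_lim.comp hlim1).const_mul (α ^ 2 * u ^ 2)).const_mul (j u)
    have hval : (j u * u ^ 2) * (-(α ^ 2 / 6)) = j u * (α ^ 2 * u ^ 2 * (-(1 / 6))) := by
      ring
    rw [hval]
    apply Filter.Tendsto.congr' _ hlim3
    filter_upwards [Filter.eventually_ge_atTop (1:ℝ)] with t ht
    have ht0 : (0:ℝ) < t := lt_of_lt_of_le one_pos ht
    set s := t ^ (-(1:ℝ)/2) with hs
    set θ := u * α * s with hθdef
    set d := u * α * t ^ (-(3:ℝ)/2) with hddef
    have hspos : 0 < s := Real.rpow_pos_of_pos ht0 _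
    have hdpos : 0 < t ^ (-(3:ℝ)/2) := Real.rpow_pos_of_pos ht0 _
    have hθ : θ ≠ 0 := mul_ne_zero (mul_ne_zero hu hα) hspos.ne'
    have hd : d ≠ 0 := mul_ne_zero (mul_ne_zero hu hα) hdpos.ne'
    have hdt : d * t = θ := by
      rw [hddef, hθdef, hs, mul_assoc, rpow_e1 ht0]
    have hident : Real.sin θ / d - t = (Real.sin θ - θ) / d := by
      rw [sub_div]
      congr 1
      rw [← hdt, mul_div_cancel_left₀ _ hd]
    have hkey : θ ^ 3 = α ^ 2 * u ^ 2 * d := by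
      rw [hθdef, hddef, ← rpow_e3 ht0]
      ring
    have hident2 : Real.sin θ / d - t = α ^ 2 * u ^ 2 * ((Real.sin θ - θ) / θ ^ 3) := by
      rw [hident, ← mul_div_assoc, div_eq_div_iff hd (pow_ne_zero 3 hθ), hkey]
      ring
    rw [← hident2]

/-- With `φ(q) = ∫ j(v) e^{ivq} dv` for a symmetric integrable jump-rate density `j` with
finite second moment `σ`, the function
`ψ_t(v) = exp(∫_0^t [φ(t^{−3/2}(2/λ)(t−r)v) − φ(0)] dr)` converges as `t → ∞` to
`exp(−(2σ/(3λ²)) v²)`. -/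
theorem stmt13 (j : ℝ → ℝ) (hj : Integrable j) (hjnn : ∀ v, 0 ≤ j v)
    (hjsymm : ∀ v, j (-v) = j v)
    (hj2 : Integrable fun u => j u * u ^ 2)
    (σ lam v : ℝ) (hσ : σ = ∫ u, j u * u ^ 2) (hlam : 0 < lam) :
    Filter.Tendsto
      (fun t : ℝ => Complex.exp
        (∫ r in (0:ℝ)..t,
          ((∫ u : ℝ, (j u : ℂ) *
              Complex.exp (Complex.I *
                ((u * (t ^ (-(3:ℝ)/2) * ((2 / lam) * (t - r) * v)) : ℝ) : ℂ)))
            - ∫ u : ℝ, (j u : ℂ))))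
      Filter.atTop
      (nhds (Complex.exp (((-(2 * σ / (3 * lam ^ 2)) * v ^ 2 : ℝ)) : ℂ))) := by
  rcases eq_or_ne v 0 with rfl | hv
  · simp only [mul_zero, Complex.ofReal_zero, Complex.exp_zero, mul_one, sub_self,
      intervalIntegral.integral_zero, ne_eq, OfNat.ofNat_ne_zero, not_false_eq_true,
      zero_pow, neg_zero, zero_mul]
    exact tendsto_const_nhds
  · set α : ℝ := 2 / lam * v with hαdef
    have hα : α ≠ 0 := mul_ne_zero (div_ne_zero two_ne_zero hlam.ne') hv
    have hae : ∀ᵐ u : ℝ, u ≠ 0 := by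
      have : ∀ᵐ u : ℝ, u ∈ ({0}ᶜ : Set ℝ) :=
        MeasureTheory.compl_mem_ae_iff.mpr (measure_singleton 0)
      filter_upwards [this] with u hu using hu
    -- target value identification
    have hL : ((-(2 * σ / (3 * lam ^ 2)) * v ^ 2 : ℝ))
        = ∫ u : ℝ, (j u * u ^ 2) * (-(α ^ 2 / 6)) := by
      rw [integral_mul_const, ← hσ, hαdef]
      field_simp
      ring
    -- the real-valued limit
    have hR := key4 j hj hjnn hj2 α hα
    -- continuity composition
    have hC : Filter.Tendsto
        (fun t : ℝ => Complex.exp (((∫ u : ℝ,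
          j u * (Real.sin (u * α * t ^ (-(1:ℝ)/2)) / (u * α * t ^ (-(3:ℝ)/2)) - t)) : ℝ) : ℂ))
        Filter.atTop
        (nhds (Complex.exp (((∫ u : ℝ, (j u * u ^ 2) * (-(α ^ 2 / 6)) : ℝ)) : ℂ))) :=
      (Complex.continuous_exp.tendsto _).comp ((Complex.continuous_ofReal.tendsto _).comp hR)
    rw [hL]
    apply Filter.Tendsto.congr' _ hC
    filter_upwards [Filter.eventually_ge_atTop (1:ℝ)] with t ht
    have ht0 : (0:ℝ) < t := lt_of_lt_of_le one_pos ht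
    congr 1
    -- step (a): key1 pointwise in r
    have ha : (∫ r in (0:ℝ)..t,
        ((∫ u : ℝ, (j u : ℂ) *
            Complex.exp (Complex.I *
              ((u * (t ^ (-(3:ℝ)/2) * ((2 / lam) * (t - r) * v)) : ℝ) : ℂ)))
          - ∫ u : ℝ, (j u : ℂ)))
        = ∫ r in (0:ℝ)..t,
          (((∫ u : ℝ, j u * (Real.cos (u * (t ^ (-(3:ℝ)/2) * ((2 / lam) * (t - r) * v))) - 1)
            : ℝ)) : ℂ) := by
      apply intervalIntegral.integral_congr
      intro r _
      exact key1 j hj hjsymm _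
    rw [ha, intervalIntegral.integral_ofReal]
    rw [show (Complex.ofReal = fun r : ℝ => (r : ℂ)) from rfl]
    congr 1
    -- step (c): Fubini
    have hc : (∫ r in (0:ℝ)..t,
        (∫ u : ℝ, j u * (Real.cos (u * (t ^ (-(3:ℝ)/2) * ((2 / lam) * (t - r) * v))) - 1)))
        = ∫ u : ℝ, (∫ r in (0:ℝ)..t,
            j u * (Real.cos (u * (t ^ (-(3:ℝ)/2) * ((2 / lam) * (t - r) * v))) - 1)) := by
      apply key2 j hj _ _ _ t ht0.le
      · exact (Real.continuous_cos.comp (continuous_snd.mul (continuous_const.mul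
          ((continuous_const.mul (continuous_const.sub continuous_fst)).mul
            continuous_const)))).sub continuous_const
      · intro r u
        have h1 := Real.neg_one_le_cos (u * (t ^ (-(3:ℝ)/2) * ((2 / lam) * (t - r) * v)))
        have h2 := Real.cos_le_one (u * (t ^ (-(3:ℝ)/2) * ((2 / lam) * (t - r) * v)))
        rw [abs_le]
        constructor <;> linarith
    rw [hc]
    -- step (d): inner closed form, a.e. in u
    apply integral_congr_ae
    filter_upwards [hae] with u hu
    have hdpos : 0 < t ^ (-(3:ℝ)/2) := Real.rpow_pos_of_pos ht0 _
    set b : ℝ := u * α * t ^ (-(3:ℝ)/2) with hbdef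
    have hb : b ≠ 0 := mul_ne_zero (mul_ne_zero hu hα) hdpos.ne'
    have harg : ∀ r : ℝ, u * (t ^ (-(3:ℝ)/2) * ((2 / lam) * (t - r) * v)) = b * (t - r) := by
      intro r
      rw [hbdef, hαdef]
      ring
    have hinner : (∫ r in (0:ℝ)..t,
        j u * (Real.cos (u * (t ^ (-(3:ℝ)/2) * ((2 / lam) * (t - r) * v))) - 1))
        = j u * (Real.sin (b * t) / b - t) := by
      rw [show (fun r => j u * (Real.cos (u * (t ^ (-(3:ℝ)/2) * ((2 / lam) * (t - r) * v))) - 1))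
          = fun r => j u * (Real.cos (b * (t - r)) - 1) from funext fun r => by rw [harg r]]
      rw [intervalIntegral.integral_const_mul, key3 b t hb]
    rw [hinner]
    have hbt : b * t = u * α * t ^ (-(1:ℝ)/2) := by
      rw [hbdef, mul_assoc, rpow_e1 ht0]
    rw [hbt]
end

section
/- Let 𝐪 : ℝ → ℝ satisfy the Krönig–Penney relation cos(2πk) = cos(2π𝐪(k)) + (α/(2𝐪(k))) sin(2π𝐪(k)) for k ∉ (1/2)ℤ, with 𝐪 increasing, antisymmetric, and 𝐪(n/2) = n/2 for n ∈ ℤ, where α > 0. Then there exists K > 0 such that for all |k| ≥ K, |𝐪(k) − k| ≤ α/(π|k|). -/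
open Real

/-- Core trigonometric estimate: if `a, b ∈ (0, π)` satisfy
`cos a - cos b = β sin b` with `β > 0`, then `a < b` and `b - a ≤ π β`. -/
lemma kp_core_aux {a b β : ℝ} (hβ : 0 < β) (ha0 : 0 < a) (haπ : a < π)
    (hb0 : 0 < b) (hbπ : b < π)
    (heq : Real.cos a - Real.cos b = β * Real.sin b) :
    a < b ∧ b - a ≤ π * β := by
  have hπ := Real.pi_pos
  have hsb : 0 < Real.sin b := Real.sin_pos_of_pos_of_lt_pi hb0 hbπ
  have hab : a < b := by
    by_contra h
    push_neg at h
    have hle : Real.cos a ≤ Real.cos b := by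
      rcases eq_or_lt_of_le h with h' | h'
      · rw [h']
      · exact (Real.cos_lt_cos_of_nonneg_of_le_pi hb0.le haπ.le h').le
    nlinarith
  set s := (a + b) / 2 with hs
  set d := (b - a) / 2 with hd
  have hd0 : 0 < d := by rw [hd]; linarith
  have hdlt : d < π / 2 := by rw [hd]; linarith
  have hs0 : 0 < s := by rw [hs]; linarith
  have hsπ : s < π := by rw [hs]; linarith
  have hss : 0 < Real.sin s := Real.sin_pos_of_pos_of_lt_pi hs0 hsπ
  have hsd : 0 < Real.sin d := Real.sin_pos_of_pos_of_lt_pi hd0 (by linarith)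
  have e1 : Real.cos a - Real.cos b = 2 * Real.sin s * Real.sin d := by
    rw [Real.cos_sub_cos]
    have h1 : (a - b) / 2 = -d := by rw [hd]; ring
    have h2 : (a + b) / 2 = s := hs.symm
    rw [h1, h2, Real.sin_neg]; ring
  have e2 : Real.sin b = Real.sin s * Real.cos d + Real.cos s * Real.sin d := by
    have hb' : b = s + d := by rw [hs, hd]; ring
    rw [hb', Real.sin_add]
  have E : 2 * Real.sin s * Real.sin d
      = β * (Real.sin s * Real.cos d + Real.cos s * Real.sin d) := by
    rw [← e1, ← e2, heq]
  have claim : Real.sin d ≤ β := by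
    by_cases hc : β * Real.cos s ≤ Real.sin s
    · -- then sin s * sin d ≤ β * sin s * cos d ≤ β * sin s
      have hcd : Real.cos d ≤ 1 := Real.cos_le_one d
      nlinarith [mul_le_mul_of_nonneg_right hc hsd.le,
        mul_le_mul_of_nonneg_left hcd (mul_nonneg hβ.le hss.le),
        mul_pos hss hsd]
    · push_neg at hc
      have hcs : 0 < Real.cos s := by nlinarith
      have hs2 : s ≤ π / 2 := by
        by_contra h
        push_neg at h
        have := Real.cos_nonpos_of_pi_div_two_le_of_le h.le (by linarith)
        linarith
      have hds : d < s := by rw [hd, hs]; linarith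
      have hmono : Real.sin d ≤ Real.sin s :=
        (Real.strictMonoOn_sin ⟨by linarith, by linarith⟩ ⟨by linarith, hs2⟩ hds).le
      nlinarith [Real.cos_le_one s]
  have jordan : 2 / π * d ≤ Real.sin d := Real.mul_le_sin hd0.le hdlt.le
  refine ⟨hab, ?_⟩
  have h3 : 2 * d ≤ π * Real.sin d := by
    have h := mul_le_mul_of_nonneg_left jordan hπ.le
    have h4 : π * (2 / π * d) = 2 * d := by field_simp
    linarith [h4 ▸ h]
  have h5 : π * Real.sin d ≤ π * β := mul_le_mul_of_nonneg_left claim hπ.le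
  have hba : b - a = 2 * d := by rw [hd]; ring
  linarith

set_option maxHeartbeats 1600000 in
/-- The positive-`k` case of the main theorem. -/
lemma kp_pos_aux (α : ℝ) (hα : 0 < α) (q : ℝ → ℝ)
    (hKP : ∀ k : ℝ, (∀ n : ℤ, k ≠ (n : ℝ) / 2) →
      Real.cos (2 * Real.pi * k) =
        Real.cos (2 * Real.pi * q k) + α / (2 * q k) * Real.sin (2 * Real.pi * q k))
    (hmono : StrictMono q)
    (hlat : ∀ n : ℤ, q ((n : ℝ) / 2) = (n : ℝ) / 2) :
    ∀ k : ℝ, 3 ≤ k → |q k - k| ≤ α / (Real.pi * |k|) := by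
  intro k hk
  have hπ := Real.pi_pos
  have hπ15 := Real.pi_lt_d2
  have hk0 : 0 < k := by linarith
  by_cases hhalf : ∀ n : ℤ, k ≠ (n : ℝ) / 2
  · -- nontrivial case
    set n : ℤ := ⌊2 * k⌋ with hn
    have hn1 : (n : ℝ) ≤ 2 * k := Int.floor_le _
    have hn2 : 2 * k < (n : ℝ) + 1 := Int.lt_floor_add_one _
    have hn1' : (n : ℝ) < 2 * k := by
      rcases eq_or_lt_of_le hn1 with h | h
      · exact absurd (by linarith : k = (n : ℝ) / 2) (hhalf n)
      · exact h
    have qlow : (n : ℝ) / 2 < q k := by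
      rw [← hlat n]
      exact hmono (by linarith)
    have qhigh : q k < ((n : ℝ) + 1) / 2 := by
      have h2 : q k < q (((n + 1 : ℤ) : ℝ) / 2) := hmono (by push_cast; linarith)
      rw [hlat (n + 1)] at h2
      push_cast at h2
      exact h2
    have hq0 : 0 < q k := by linarith
    have hβ : 0 < α / (2 * q k) := by positivity
    have hKPk := hKP k hhalf
    set a : ℝ := 2 * π * k - n * π with ha
    set b : ℝ := 2 * π * q k - n * π with hb
    have ha0 : 0 < a := by rw [ha]; nlinarith
    have haπ : a < π := by rw [ha]; nlinarith
    have hb0 : 0 < b := by rw [hb]; nlinarith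
    have hbπ : b < π := by rw [hb]; nlinarith
    have hxa : 2 * π * k = a + (n : ℤ) * π := by rw [ha]; push_cast; ring
    have hxb : 2 * π * q k = b + (n : ℤ) * π := by rw [hb]; push_cast; ring
    rw [hxa, hxb, Real.cos_add_int_mul_pi, Real.cos_add_int_mul_pi,
      Real.sin_add_int_mul_pi] at hKPk
    have hne : ((-1 : ℝ)) ^ n ≠ 0 := by
      apply zpow_ne_zero
      norm_num
    have heq : Real.cos a - Real.cos b = α / (2 * q k) * Real.sin b := by
      have h2 : ((-1 : ℝ)) ^ n * Real.cos a
          = ((-1 : ℝ)) ^ n * (Real.cos b + α / (2 * q k) * Real.sin b) := by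
        rw [hKPk]; ring
      have h3 := mul_left_cancel₀ hne h2
      linarith
    obtain ⟨hab, hba⟩ := kp_core_aux hβ ha0 haπ hb0 hbπ heq
    -- b - a = 2π (q k - k)
    have hdiff : b - a = 2 * π * (q k - k) := by rw [ha, hb]; ring
    have hpos : 0 < q k - k := by nlinarith
    have key : 2 * π * (q k - k) ≤ π * (α / (2 * q k)) := by rw [← hdiff]; exact hba
    -- clear the division: 4 * q k * (q k - k) ≤ α
    have key2 : 4 * q k * (q k - k) ≤ α := by
      have h4 := mul_le_mul_of_nonneg_right key (by positivity : (0:ℝ) ≤ 2 * q k)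
      have h5 : π * (α / (2 * q k)) * (2 * q k) = π * α := by
        field_simp
      rw [h5] at h4
      nlinarith
    -- π k ≤ 4 q k since q k > k - 1/2 and k ≥ 3
    have hqk : k - 1 / 2 < q k := by linarith
    have hπk : π * k ≤ 4 * q k := by nlinarith
    have hmul : (q k - k) * (π * k) ≤ (q k - k) * (4 * q k) :=
      mul_le_mul_of_nonneg_left hπk hpos.le
    have final : (q k - k) * (π * k) ≤ α := by linarith [key2, hmul]
    rw [abs_of_pos hpos, abs_of_pos hk0, le_div_iff₀ (by positivity)]
    exact final
  · push_neg at hhalf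
    obtain ⟨n, hn⟩ := hhalf
    have : q k = k := by rw [hn, hlat n]
    rw [this, sub_self, abs_zero]
    positivity

/-- If `𝐪 : ℝ → ℝ` satisfies the Krönig–Penney relation
`cos(2πk) = cos(2π𝐪(k)) + (α/(2𝐪(k))) sin(2π𝐪(k))` off the half-integer lattice, is
increasing and antisymmetric with `𝐪(n/2) = n/2`, then there is `K > 0` such that
`|𝐪(k) − k| ≤ α/(π|k|)` for all `|k| ≥ K`. -/
theorem stmt14 (α : ℝ) (hα : 0 < α) (q : ℝ → ℝ)
    (hKP : ∀ k : ℝ, (∀ n : ℤ, k ≠ (n : ℝ) / 2) →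
      Real.cos (2 * Real.pi * k) =
        Real.cos (2 * Real.pi * q k) + α / (2 * q k) * Real.sin (2 * Real.pi * q k))
    (hmono : StrictMono q) (hodd : ∀ k, q (-k) = -q k)
    (hlat : ∀ n : ℤ, q ((n : ℝ) / 2) = (n : ℝ) / 2) :
    ∃ K : ℝ, 0 < K ∧ ∀ k : ℝ, K ≤ |k| → |q k - k| ≤ α / (Real.pi * |k|) := by
  refine ⟨3, by norm_num, fun k hk => ?_⟩
  rcases le_or_gt 0 k with h | h
  · rw [abs_of_nonneg h] at hk
    exact kp_pos_aux α hα q hKP hmono hlat k hk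
  · rw [abs_of_neg h] at hk
    have h1 := kp_pos_aux α hα q hKP hmono hlat (-k) hk
    have h2 : q k = -q (-k) := by
      have := hodd (-k)
      rw [neg_neg] at this
      linarith
    rw [abs_of_neg h]
    calc |q k - k| = |q (-k) - (-k)| := by rw [h2]; rw [show -q (-k) - k = -(q (-k) - (-k)) by ring, abs_neg]
      _ ≤ α / (Real.pi * |(-k)|) := h1
      _ = α / (Real.pi * (-k)) := by rw [abs_of_pos (by linarith : (0:ℝ) < -k)]
end
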